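/- arXiv:math/0506193 — 2 statements merged into one kernel-verified Lean document; each statement's English description precedes it below -/
import Mathlib

section
/- The group homomorphism η : B(K_n) → B(A_n) defined by a_i ↦ c_i (with c_n = σ_n, c_k = σ_k^{-1} c_{k+1} σ_k) is surjective. -/
/-- The braid relations of type `A_n` on generators `σ_1, …, σ_n`
(encoded with `0`-based indices `0, …, n-1`). -/
def braidRelsA (n : ℕ) : Set (FreeGroup (Fin n)) :=
  {r | (∃ i j : Fin n, (i : ℕ) + 1 = (j : ℕ) ∧
        r = .of i * .of j * .of i * (.of j * .of i * .of j)⁻¹) ∨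
      (∃ i j : Fin n, (i : ℕ) + 1 < (j : ℕ) ∧
        r = .of i * .of j * (.of j * .of i)⁻¹)}

/-- The Artin braid group `B(A_n)` with generators `σ_1, …, σ_n`. -/
abbrev BraidA (n : ℕ) := PresentedGroup (braidRelsA n)

/-- The generator `σ_{k+1}` of `B(A_n)` (`0`-based index `k`). -/
def σA {n : ℕ} (k : ℕ) : BraidA n :=
  if h : k < n then PresentedGroup.of ⟨k, h⟩ else 1

/-- The elements `c_k` (`0`-based: `cA n k` is `c_{k+1}` of the paper):
`c_n := σ_n` and `c_k := σ_k⁻¹ * c_{k+1} * σ_k`. -/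
def cA (n : ℕ) (k : ℕ) : BraidA n :=
  if _h : k + 1 < n then (σA k)⁻¹ * cA n (k + 1) * σA k
  else if _h2 : k < n then σA k else 1
  termination_by n - k
  decreasing_by omega

/-- The relations of the braid group `B(K_n)` whose Coxeter graph is the
complete graph on `n` vertices: `a_i a_j a_i = a_j a_i a_j` for all `i ≠ j`. -/
def braidRelsK (n : ℕ) : Set (FreeGroup (Fin n)) :=
  {r | ∃ i j : Fin n, i ≠ j ∧
        r = .of i * .of j * .of i * (.of j * .of i * .of j)⁻¹}

/-- The braid group `B(K_n)` of the complete graph on `n` vertices. -/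
abbrev BraidK (n : ℕ) := PresentedGroup (braidRelsK n)

/-- The generator `a_{k+1}` of `B(K_n)` (`0`-based index `k`). -/
def aK {n : ℕ} (k : ℕ) : BraidK n :=
  if h : k < n then PresentedGroup.of ⟨k, h⟩ else 1

/- ### Auxiliary lemmas -/

theorem pg_rel_one {α : Type*} {rels : Set (FreeGroup α)} {r : FreeGroup α} (h : r ∈ rels) :
    PresentedGroup.mk rels r = 1 :=
  (QuotientGroup.eq_one_iff r).2 (Subgroup.subset_normalClosure h)

theorem sigma_braidrel {n i j : ℕ} (hij : i + 1 = j) (hj : j < n) :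
    σA (n := n) i * σA j * σA i = σA j * σA i * σA j := by
  have hi : i < n := by omega
  have hrel : (FreeGroup.of (⟨i, hi⟩ : Fin n) * .of ⟨j, hj⟩ * .of ⟨i, hi⟩ *
      (.of ⟨j, hj⟩ * .of ⟨i, hi⟩ * .of ⟨j, hj⟩)⁻¹) ∈ braidRelsA n :=
    Or.inl ⟨⟨i, hi⟩, ⟨j, hj⟩, by simpa using hij, rfl⟩
  have h1 := pg_rel_one hrel
  simp only [map_mul, map_inv] at h1
  have h2 := mul_inv_eq_one.mp h1
  simpa [σA, hi, hj, PresentedGroup.of, mul_assoc] using h2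

theorem sigma_comm {n i j : ℕ} (hij : i + 1 < j) :
    σA (n := n) i * σA j = σA j * σA i := by
  by_cases hj : j < n
  · have hi : i < n := by omega
    have hrel : (FreeGroup.of (⟨i, hi⟩ : Fin n) * .of ⟨j, hj⟩ *
        (.of ⟨j, hj⟩ * .of ⟨i, hi⟩)⁻¹) ∈ braidRelsA n :=
      Or.inr ⟨⟨i, hi⟩, ⟨j, hj⟩, by simpa using hij, rfl⟩
    have h1 := pg_rel_one hrel
    simp only [map_mul, map_inv] at h1
    have h2 := mul_inv_eq_one.mp h1
    simpa [σA, hi, hj, PresentedGroup.of, mul_assoc] using h2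
  · simp [σA, hj]

/-- `σ_k` commutes with `c_j` for `j ≥ k + 2`. -/
theorem sigma_c_comm (n k j : ℕ) (h : k + 2 ≤ j) :
    σA (n := n) k * cA n j = cA n j * σA k := by
  rw [cA]
  split_ifs with h1 h2
  · have IH := sigma_c_comm n k (j + 1) (by omega)
    have hc : σA (n := n) k * σA j = σA j * σA k := sigma_comm (by omega)
    have hc' : σA (n := n) k * (σA j)⁻¹ = (σA j)⁻¹ * σA k := by
      calc σA (n := n) k * (σA j)⁻¹
          = (σA j)⁻¹ * (σA j * σA k) * (σA j)⁻¹ := by group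
        _ = (σA j)⁻¹ * (σA k * σA j) * (σA j)⁻¹ := by rw [← hc]
        _ = (σA j)⁻¹ * σA k := by group
    calc σA (n := n) k * ((σA j)⁻¹ * cA n (j+1) * σA j)
        = (σA k * (σA j)⁻¹) * cA n (j+1) * σA j := by group
      _ = ((σA j)⁻¹ * σA k) * cA n (j+1) * σA j := by rw [hc']
      _ = (σA j)⁻¹ * (σA k * cA n (j+1)) * σA j := by group
      _ = (σA j)⁻¹ * (cA n (j+1) * σA k) * σA j := by rw [IH]
      _ = (σA j)⁻¹ * cA n (j+1) * (σA k * σA j) := by group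
      _ = (σA j)⁻¹ * cA n (j+1) * (σA j * σA k) := by rw [hc]
      _ = (σA j)⁻¹ * cA n (j+1) * σA j * σA k := by group
  · exact sigma_comm (by omega)
  · group
  termination_by n - j

section PureGroup
variable {G : Type*} [Group G] {t s c u v : G}

theorem braid_step (h1 : t * s * t = s * t * s) (h2 : s * c * s = c * s * c)
    (h3 : t * c = c * t) : t * (s⁻¹ * c * s) * t = (s⁻¹ * c * s) * t * (s⁻¹ * c * s) := by
  have e1 : s * t * s⁻¹ = t⁻¹ * s * t := by
    calc s * t * s⁻¹ = t⁻¹ * (t * s * t) * s⁻¹ := by group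
      _ = t⁻¹ * (s * t * s) * s⁻¹ := by rw [h1]
      _ = t⁻¹ * s * t := by group
  have e3 : c * t⁻¹ = t⁻¹ * c := by
    calc c * t⁻¹ = t⁻¹ * (t * c) * t⁻¹ := by group
      _ = t⁻¹ * (c * t) * t⁻¹ := by rw [h3]
      _ = t⁻¹ * c := by group
  symm
  calc (s⁻¹ * c * s) * t * (s⁻¹ * c * s)
      = s⁻¹ * c * (s * t * s⁻¹) * c * s := by group
    _ = s⁻¹ * c * (t⁻¹ * s * t) * c * s := by rw [e1]
    _ = s⁻¹ * (c * t⁻¹) * s * (t * c) * s := by group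
    _ = s⁻¹ * (t⁻¹ * c) * s * (c * t) * s := by rw [e3, h3]
    _ = s⁻¹ * t⁻¹ * (c * s * c) * (t * s) := by group
    _ = s⁻¹ * t⁻¹ * (s * c * s) * (t * s) := by rw [← h2]
    _ = s⁻¹ * t⁻¹ * s * c * (s * t * s) := by group
    _ = s⁻¹ * t⁻¹ * s * c * (t * s * t) := by rw [← h1]
    _ = s⁻¹ * t⁻¹ * s * (c * t) * (s * t) := by group
    _ = s⁻¹ * t⁻¹ * s * (t * c) * (s * t) := by rw [← h3]
    _ = s⁻¹ * (t⁻¹ * s * t) * c * s * t := by group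
    _ = s⁻¹ * (s * t * s⁻¹) * c * s * t := by rw [← e1]
    _ = t * (s⁻¹ * c * s) * t := by group

theorem conj_eq (h : t * u * t = u * t * u) : t⁻¹ * u * t = u * t * u⁻¹ := by
  calc t⁻¹ * u * t = t⁻¹ * (u * t * u) * u⁻¹ := by group
    _ = t⁻¹ * (t * u * t) * u⁻¹ := by rw [← h]
    _ = u * t * u⁻¹ := by group

theorem braid_conj (h : t * u * t = u * t * u) :
    (t⁻¹ * u * t) * u * (t⁻¹ * u * t) = u * (t⁻¹ * u * t) * u := by
  rw [conj_eq h]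
  calc (u * t * u⁻¹) * u * (u * t * u⁻¹)
      = u * (t * u * t) * u⁻¹ := by group
    _ = u * (u * t * u) * u⁻¹ := by rw [h]
    _ = u * (u * t * u⁻¹) * u := by group

theorem sigma_eq_conj (h : t * u * t = u * t * u) :
    (t⁻¹ * u * t) * u * (t⁻¹ * u * t)⁻¹ = t := by
  rw [conj_eq h]
  calc (u * t * u⁻¹) * u * (u * t * u⁻¹)⁻¹
      = (u * t * u) * t⁻¹ * u⁻¹ := by group
    _ = (t * u * t) * t⁻¹ * u⁻¹ := by rw [← h]
    _ = t := by group

theorem braid_shift (h1 : u * v * u = v * u * v) (h3 : t * v = v * t) :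
    (t⁻¹ * u * t) * v * (t⁻¹ * u * t) = v * (t⁻¹ * u * t) * v := by
  have e : t * v * t⁻¹ = v := by rw [h3]; group
  have e2 : t⁻¹ * v * t = v := by rw [mul_assoc, ← h3]; group
  calc (t⁻¹ * u * t) * v * (t⁻¹ * u * t)
      = t⁻¹ * u * (t * v * t⁻¹) * u * t := by group
    _ = t⁻¹ * u * v * u * t := by rw [e]
    _ = t⁻¹ * (u * v * u) * t := by group
    _ = t⁻¹ * (v * u * v) * t := by rw [h1]
    _ = (t⁻¹ * v * t) * (t⁻¹ * u * t) * (t⁻¹ * v * t) := by group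
    _ = v * (t⁻¹ * u * t) * v := by rw [e2]

end PureGroup

/-- The braid relation between `σ_k` and `c_{k+1}`. -/
theorem braid_sigma_c (n k : ℕ) (h : k + 1 < n) :
    σA (n := n) k * cA n (k + 1) * σA k = cA n (k + 1) * σA k * cA n (k + 1) := by
  rw [cA]
  split_ifs with h1
  · -- k + 2 < n
    exact braid_step (sigma_braidrel rfl (by omega))
      (braid_sigma_c n (k + 1) (by omega)) (sigma_c_comm n k (k + 2) (by omega))
  · exact sigma_braidrel rfl h
  termination_by n - k

/-- The braid relation between `c_k` and `c_l` for `k < l < n`. -/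
theorem c_braid (n k l : ℕ) (hkl : k < l) (hl : l < n) :
    cA n k * cA n l * cA n k = cA n l * cA n k * cA n l := by
  have hk1 : k + 1 < n := by omega
  by_cases hcase : l = k + 1
  · subst hcase
    rw [cA, dif_pos hk1]
    exact braid_conj (braid_sigma_c n k hk1)
  · have hl2 : k + 2 ≤ l := by omega
    have hck : cA n k = (σA k)⁻¹ * cA n (k + 1) * σA k := by rw [cA, dif_pos hk1]
    rw [hck]
    exact braid_shift (c_braid n (k + 1) l (by omega) hl) (sigma_c_comm n k l hl2)
  termination_by l - k

theorem eta_relations (n : ℕ) :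
    ∀ r ∈ braidRelsK n, FreeGroup.lift (fun i : Fin n => cA n (i : ℕ)) r = 1 := by
  rintro r ⟨i, j, hij, rfl⟩
  simp only [map_mul, map_inv, FreeGroup.lift_apply_of]
  rw [mul_inv_eq_one]
  rcases lt_or_gt_of_ne (fun h : (i : ℕ) = (j : ℕ) => hij (Fin.ext h)) with h | h
  · exact c_braid n i j h j.isLt
  · exact (c_braid n j i h i.isLt).symm

/-- The group homomorphism `η : B(K_n) → B(A_n)`, `a_i ↦ c_i`, is
surjective. -/
theorem eta_surjective (n : ℕ) :
    ∃ η : BraidK n →* BraidA n,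
      (∀ i : Fin n, η (aK (i : ℕ)) = cA n (i : ℕ)) ∧
      Function.Surjective η := by
  refine ⟨PresentedGroup.toGroup (eta_relations n), ?_, ?_⟩
  · intro i
    have : aK (n := n) (i : ℕ) = PresentedGroup.of i := by
      simp [aK, i.isLt]
    rw [this, PresentedGroup.toGroup.of]
  · set η := PresentedGroup.toGroup (eta_relations n) with hη
    have hmap : ∀ i : Fin n, η (aK (i : ℕ)) = cA n (i : ℕ) := by
      intro i
      have : aK (n := n) (i : ℕ) = PresentedGroup.of i := by simp [aK, i.isLt]
      rw [this]; exact PresentedGroup.toGroup.of _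
    have hc : ∀ k : ℕ, k < n → cA n k ∈ η.range := by
      intro k hk
      exact ⟨aK k, hmap ⟨k, hk⟩⟩
    rw [← MonoidHom.range_eq_top]
    rw [← top_le_iff, ← PresentedGroup.closure_range_of (braidRelsA n)]
    rw [Subgroup.closure_le]
    rintro x ⟨i, rfl⟩
    have hof : PresentedGroup.of i = σA (n := n) (i : ℕ) := by
      simp [σA, i.isLt]
    rw [hof]
    by_cases h1 : (i : ℕ) + 1 < n
    · have hb := braid_sigma_c n i h1
      have := sigma_eq_conj hb
      have hcA : cA n (i : ℕ) = (σA (i : ℕ))⁻¹ * cA n ((i : ℕ) + 1) * σA (i : ℕ) := by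
        rw [cA, dif_pos h1]
      rw [← hcA] at this
      rw [← this]
      exact mul_mem (mul_mem (hc i i.isLt) (hc _ h1)) (inv_mem (hc i i.isLt))
    · have : σA (n := n) (i : ℕ) = cA n (i : ℕ) := by
        rw [cA, dif_neg h1, dif_pos i.isLt]
      rw [this]
      exact hc i i.isLt
end

section
/- The map χ : B(B_n) → B(A_n) defined on generators by b_i ↦ σ_i for 1 ≤ i ≤ n−1 and b_n ↦ σ_n² extends to a group homomorphism; i.e., the elements σ_1,…,σ_{n-1}, σ_n² of the Artin braid group B(A_n) satisfy the Artin relations of type B_n. -/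
/-- The relations of the Artin group `B(B_n)` of type `B_n` on generators
`b_1, …, b_n` (`0`-based indices): the braid relation for consecutive
generators `b_i, b_{i+1}` with `i+1 ≤ n-2` (`0`-based), commutation for
distant generators, and the length-`4` relation
`b_{n-1} b_n b_{n-1} b_n = b_n b_{n-1} b_n b_{n-1}`. -/
def braidRelsB (n : ℕ) : Set (FreeGroup (Fin n)) :=
  {r | (∃ i j : Fin n, (i : ℕ) + 1 = (j : ℕ) ∧ (j : ℕ) + 1 < n ∧
        r = .of i * .of j * .of i * (.of j * .of i * .of j)⁻¹) ∨
      (∃ i j : Fin n, (i : ℕ) + 1 < (j : ℕ) ∧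
        r = .of i * .of j * (.of j * .of i)⁻¹) ∨
      (∃ i j : Fin n, (i : ℕ) + 2 = n ∧ (j : ℕ) + 1 = n ∧
        r = .of i * .of j * .of i * .of j *
          (.of j * .of i * .of j * .of i)⁻¹)}

/-- The Artin group `B(B_n)` of type `B_n`. -/
abbrev BraidB (n : ℕ) := PresentedGroup (braidRelsB n)

/-- The generator `b_{k+1}` of `B(B_n)` (`0`-based index `k`). -/
def bB {n : ℕ} (k : ℕ) : BraidB n :=
  if h : k < n then PresentedGroup.of ⟨k, h⟩ else 1

/-- The element `b_{n-1} b_{n-2} ⋯ b_2` of `B(B_n)` (`1`-based), i.e. the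
descending product `b_{n-2} ⋯ b_1` in `0`-based indices. -/
def descB (n : ℕ) : BraidB n :=
  (((List.range' 1 (n - 2)).map (fun k => bB (n := n) k)).reverse).prod

/-- The element `τ = b_n b_{n-1} ⋯ b_2` of `B(B_n)` (`1`-based indexing). -/
def tauB (n : ℕ) : BraidB n := bB (n - 1) * descB n

lemma relA_one {n : ℕ} {r : FreeGroup (Fin n)} (hr : r ∈ braidRelsA n) :
    PresentedGroup.mk (braidRelsA n) r = 1 :=
  (QuotientGroup.eq_one_iff _).2 (Subgroup.subset_normalClosure hr)

lemma braidA_braid {n : ℕ} (i j : Fin n) (hij : (i : ℕ) + 1 = (j : ℕ)) :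
    (PresentedGroup.of i : BraidA n) * .of j * .of i = .of j * .of i * .of j := by
  have h := relA_one (n := n) (Or.inl ⟨i, j, hij, rfl⟩)
  rw [map_mul, map_mul, map_mul, map_inv, map_mul, map_mul, mul_inv_eq_one] at h
  exact h

lemma braidA_comm {n : ℕ} (i j : Fin n) (hij : (i : ℕ) + 1 < (j : ℕ)) :
    Commute (PresentedGroup.of i : BraidA n) (.of j) := by
  have h := relA_one (n := n) (Or.inr ⟨i, j, hij, rfl⟩)
  rw [map_mul, map_inv, map_mul, map_mul, mul_inv_eq_one] at h
  exact h

lemma key_sq {G : Type*} [Group G] (a b : G) (h : a * b * a = b * a * b) :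
    a * b ^ 2 * a * b ^ 2 = b ^ 2 * a * b ^ 2 * a := by
  have e1 : a * b ^ 2 * a * b ^ 2 = a * b * (b * a * b) * b := by
    simp [pow_two, mul_assoc]
  have e2 : b ^ 2 * a * b ^ 2 * a = b * (b * a * b) * (b * a) := by
    simp [pow_two, mul_assoc]
  rw [e1, e2, ← h]
  calc a * b * (a * b * a) * b = (a * b * a) * (b * a * b) := by group
    _ = (b * a * b) * (b * a * b) := by rw [h]
    _ = (b * a * b) * (a * b * a) := by rw [h]
    _ = b * (a * b * a) * (b * a) := by group

/-- The map on generators defining `χ`. -/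
def chiF (n : ℕ) : Fin n → BraidA n :=
  fun i => if (i : ℕ) + 1 < n then PresentedGroup.of i else PresentedGroup.of i ^ 2

lemma chi_rels (n : ℕ) : ∀ r ∈ braidRelsB n, FreeGroup.lift (chiF n) r = 1 := by
  rintro r (⟨i, j, hij, hjn, rfl⟩ | ⟨i, j, hij, rfl⟩ | ⟨i, j, hin, hjn, rfl⟩)
  · have hi : (i : ℕ) + 1 < n := by omega
    simp only [map_mul, map_inv, FreeGroup.lift_apply_of, chiF, if_pos hi, if_pos hjn]
    rw [mul_inv_eq_one]
    exact braidA_braid i j hij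
  · have hi : (i : ℕ) + 1 < n := by have := j.isLt; omega
    simp only [map_mul, map_inv, FreeGroup.lift_apply_of, chiF, if_pos hi]
    rw [mul_inv_eq_one]
    by_cases hj : (j : ℕ) + 1 < n
    · rw [if_pos hj]; exact (braidA_comm i j hij).eq
    · rw [if_neg hj]; exact ((braidA_comm i j hij).pow_right 2).eq
  · have hi : (i : ℕ) + 1 < n := by omega
    have hj : ¬ ((j : ℕ) + 1 < n) := by omega
    simp only [map_mul, map_inv, FreeGroup.lift_apply_of, chiF, if_pos hi, if_neg hj]
    rw [mul_inv_eq_one]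
    exact key_sq _ _ (braidA_braid i j (by omega))

/-- The map `b_i ↦ σ_i` for `1 ≤ i ≤ n-1` and `b_n ↦ σ_n²` extends to a group
homomorphism `χ : B(B_n) → B(A_n)`; i.e. the elements
`σ_1, …, σ_{n-1}, σ_n²` of the Artin braid group `B(A_n)` satisfy the Artin
relations of type `B_n` (`0`-based indices). -/
theorem exists_chi (n : ℕ) :
    ∃ χ : BraidB n →* BraidA n,
      (∀ i : Fin n, (i : ℕ) + 1 < n → χ (bB (i : ℕ)) = σA (i : ℕ)) ∧
      χ (bB (n - 1)) = (σA (n := n) (n - 1)) ^ 2 := by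
  refine ⟨PresentedGroup.toGroup (chi_rels n), ?_, ?_⟩
  · intro i hi
    rw [bB, dif_pos i.isLt, σA, dif_pos (by omega : (i : ℕ) < n)]
    rw [show (⟨(i : ℕ), i.isLt⟩ : Fin n) = i from Fin.eta i i.isLt]
    rw [PresentedGroup.toGroup.of, chiF, if_pos hi]
  · rcases Nat.eq_zero_or_pos n with h0 | h0
    · subst h0
      rw [bB, dif_neg (by omega), σA, dif_neg (by omega), map_one, one_pow]
    · have h : n - 1 < n := by omega
      rw [bB, dif_pos h, σA, dif_pos h]
      rw [PresentedGroup.toGroup.of, chiF, if_neg (by simp; omega)]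
end
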